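/- Suppose f : ℝ² → 𝔽² preserves every distance d > 0 with d² rational. If t ∈ ℚ, 0 < t < 1, A, B ∈ ℝ², A ≠ B, and C = tA + (1-t)B, then f(C) = t·f(A) + (1-t)·f(B). -/

import Mathlib

section BQhelpers
variable {F : Type*} [Field F] [Algebra ℝ F]

private def Dre (x y : ℝ × ℝ) : ℝ := (x.1 - y.1) ^ 2 + (x.2 - y.2) ^ 2

private def QF (v : F × F) : F := v.1 ^ 2 + v.2 ^ 2

private theorem phi_eq (f : ℝ × ℝ → F × F)
    (hf : ∀ d : ℝ, 0 < d → (∃ q : ℚ, (q : ℝ) = d ^ 2) →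
      ∀ x y : ℝ × ℝ, Real.sqrt ((x.1 - y.1) ^ 2 + (x.2 - y.2) ^ 2) = d →
        ((f x).1 - (f y).1) ^ 2 + ((f x).2 - (f y).2) ^ 2 = algebraMap ℝ F (d ^ 2))
    (x y : ℝ × ℝ) (q : ℚ) (hq : (q : ℝ) = Dre x y) (hqpos : 0 < q) :
    QF (f x - f y) = (q : F) := by
  have hD : 0 < Dre x y := by rw [← hq]; exact_mod_cast hqpos
  have hd2 : Real.sqrt (Dre x y) ^ 2 = Dre x y := Real.sq_sqrt hD.le
  have h := hf (Real.sqrt (Dre x y)) (Real.sqrt_pos.mpr hD)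
    ⟨q, by rw [hd2]; exact hq⟩ x y rfl
  rw [hd2, ← hq] at h
  have h2 : algebraMap ℝ F ((q : ℚ) : ℝ) = (q : F) := map_ratCast (algebraMap ℝ F) q
  rw [h2] at h
  simpa [QF, Prod.fst_sub, Prod.snd_sub] using h

private theorem linL (f : ℝ × ℝ → F × F)
    (hf : ∀ d : ℝ, 0 < d → (∃ q : ℚ, (q : ℝ) = d ^ 2) →
      ∀ x y : ℝ × ℝ, Real.sqrt ((x.1 - y.1) ^ 2 + (x.2 - y.2) ^ 2) = d →
        ((f x).1 - (f y).1) ^ 2 + ((f x).2 - (f y).2) ^ 2 = algebraMap ℝ F (d ^ 2))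
    (Z u : ℝ × ℝ) (r : ℚ) (hr : (r : ℝ) = u.1 ^ 2 + u.2 ^ 2) (hrpos : 0 < r) (q : ℚ) :
    f (Z + (q : ℝ) • u) - f Z = (q : F) • (f (Z + u) - f Z) := by
  haveI : CharZero F := charZero_of_injective_algebraMap (algebraMap ℝ F).injective
  by_cases hq0 : q = 0
  · subst hq0; simp
  by_cases hq1 : q = 1
  · subst hq1; simp
  have hq2 : (0:ℚ) < q ^ 2 := lt_of_le_of_ne (sq_nonneg q) (Ne.symm (pow_ne_zero 2 hq0))
  have hqm1 : (0:ℚ) < (q - 1) ^ 2 :=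
    lt_of_le_of_ne (sq_nonneg _) (Ne.symm (pow_ne_zero 2 (sub_ne_zero.mpr hq1)))
  set X1 := f (Z + u) - f Z with hX1def
  set Xq := f (Z + (q : ℝ) • u) - f Z with hXqdef
  set Yw := f (Z + ((-u.2, u.1) : ℝ × ℝ)) - f Z with hYwdef
  have hXq : Xq.1 ^ 2 + Xq.2 ^ 2 = ((q ^ 2 * r : ℚ) : F) := by
    have := phi_eq f hf (Z + (q : ℝ) • u) Z (q ^ 2 * r)
      (by simp only [Dre, Prod.fst_add, Prod.snd_add, Prod.smul_fst, Prod.smul_snd,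
            smul_eq_mul]
          push_cast
          linear_combination ((q:ℝ))^2 * hr)
      (mul_pos hq2 hrpos)
    simpa [QF, hXqdef] using this
  have hX1 : X1.1 ^ 2 + X1.2 ^ 2 = ((r : ℚ) : F) := by
    have := phi_eq f hf (Z + u) Z r
      (by simp only [Dre, Prod.fst_add, Prod.snd_add]
          linear_combination hr) hrpos
    simpa [QF, hX1def] using this
  have hYw : Yw.1 ^ 2 + Yw.2 ^ 2 = ((r : ℚ) : F) := by
    have := phi_eq f hf (Z + ((-u.2, u.1) : ℝ × ℝ)) Z r
      (by simp only [Dre, Prod.fst_add, Prod.snd_add]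
          linear_combination hr) hrpos
    simpa [QF, hYwdef] using this
  have hd1 : (Xq.1 - X1.1) ^ 2 + (Xq.2 - X1.2) ^ 2 = (((q - 1) ^ 2 * r : ℚ) : F) := by
    have := phi_eq f hf (Z + (q : ℝ) • u) (Z + u) ((q - 1) ^ 2 * r)
      (by simp only [Dre, Prod.fst_add, Prod.snd_add, Prod.smul_fst, Prod.smul_snd,
            smul_eq_mul]
          push_cast
          linear_combination ((q:ℝ) - 1)^2 * hr)
      (mul_pos hqm1 hrpos)
    have e : f (Z + (q : ℝ) • u) - f (Z + u) = Xq - X1 := by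
      rw [hXqdef, hX1def]; abel
    rw [e] at this
    simpa [QF, Prod.fst_sub, Prod.snd_sub] using this
  have hd2 : (X1.1 - Yw.1) ^ 2 + (X1.2 - Yw.2) ^ 2 = ((2 * r : ℚ) : F) := by
    have := phi_eq f hf (Z + u) (Z + ((-u.2, u.1) : ℝ × ℝ)) (2 * r)
      (by simp only [Dre, Prod.fst_add, Prod.snd_add]
          push_cast
          linear_combination 2 * hr)
      (by linarith)
    have e : f (Z + u) - f (Z + ((-u.2, u.1) : ℝ × ℝ)) = X1 - Yw := by
      rw [hX1def, hYwdef]; abel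
    rw [e] at this
    simpa [QF, Prod.fst_sub, Prod.snd_sub] using this
  have hd3 : (Xq.1 - Yw.1) ^ 2 + (Xq.2 - Yw.2) ^ 2 = ((q ^ 2 * r + r : ℚ) : F) := by
    have := phi_eq f hf (Z + (q : ℝ) • u) (Z + ((-u.2, u.1) : ℝ × ℝ)) (q ^ 2 * r + r)
      (by simp only [Dre, Prod.fst_add, Prod.snd_add, Prod.smul_fst, Prod.smul_snd,
            smul_eq_mul]
          push_cast
          linear_combination ((q:ℝ)^2 + 1) * hr)
      (by positivity)
    have e : f (Z + (q : ℝ) • u) - f (Z + ((-u.2, u.1) : ℝ × ℝ)) = Xq - Yw := by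
      rw [hXqdef, hYwdef]; abel
    rw [e] at this
    simpa [QF, Prod.fst_sub, Prod.snd_sub] using this
  push_cast at hXq hX1 hYw hd1 hd2 hd3
  have B1 : X1.1 * Xq.1 + X1.2 * Xq.2 = (q : F) * (r : F) := by
    linear_combination (hXq + hX1 - hd1) / 2
  have B2 : Yw.1 * Xq.1 + Yw.2 * Xq.2 = 0 := by
    linear_combination (hXq + hYw - hd3) / 2
  have B3 : X1.1 * Yw.1 + X1.2 * Yw.2 = 0 := by
    linear_combination (hX1 + hYw - hd2) / 2
  have hrne : ((r : ℚ) : F) ≠ 0 := by exact_mod_cast hrpos.ne'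
  have hdet2 : (X1.1 * Yw.2 - X1.2 * Yw.1) ^ 2 = (r : F) * (r : F) := by
    have key : (X1.1 * Yw.2 - X1.2 * Yw.1) ^ 2 + (X1.1 * Yw.1 + X1.2 * Yw.2) ^ 2
        = (X1.1 ^ 2 + X1.2 ^ 2) * (Yw.1 ^ 2 + Yw.2 ^ 2) := by ring
    rw [B3] at key
    rw [hX1, hYw] at key
    linear_combination key
  have hdet : X1.1 * Yw.2 - X1.2 * Yw.1 ≠ 0 := by
    intro h
    rw [h] at hdet2
    exact hrne (by
      have : ((r:F)) * (r:F) = 0 := by linear_combination -hdet2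
      exact (mul_self_eq_zero.mp this))
  have e1 : X1.1 * (Xq.1 - (q : F) * X1.1) + X1.2 * (Xq.2 - (q : F) * X1.2) = 0 := by
    linear_combination B1 - (q : F) * hX1
  have e2 : Yw.1 * (Xq.1 - (q : F) * X1.1) + Yw.2 * (Xq.2 - (q : F) * X1.2) = 0 := by
    linear_combination B2 - (q : F) * B3
  have w1 : Xq.1 - (q : F) * X1.1 = 0 := by
    have h := mul_eq_zero.mp (show (X1.1 * Yw.2 - X1.2 * Yw.1) * (Xq.1 - (q : F) * X1.1) = 0 by
      linear_combination Yw.2 * e1 - X1.2 * e2)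
    exact h.resolve_left hdet
  have w2 : Xq.2 - (q : F) * X1.2 = 0 := by
    have h := mul_eq_zero.mp (show (X1.1 * Yw.2 - X1.2 * Yw.1) * (Xq.2 - (q : F) * X1.2) = 0 by
      linear_combination X1.1 * e2 - Yw.1 * e1)
    exact h.resolve_left hdet
  have : Xq = (q : F) • X1 := by
    apply Prod.ext
    · simpa [Prod.smul_fst, smul_eq_mul, sub_eq_zero] using w1
    · simpa [Prod.smul_snd, smul_eq_mul, sub_eq_zero] using w2
  simpa [hXqdef] using this

private theorem transfer (f : ℝ × ℝ → F × F)
    (hf : ∀ d : ℝ, 0 < d → (∃ q : ℚ, (q : ℝ) = d ^ 2) →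
      ∀ x y : ℝ × ℝ, Real.sqrt ((x.1 - y.1) ^ 2 + (x.2 - y.2) ^ 2) = d →
        ((f x).1 - (f y).1) ^ 2 + ((f x).2 - (f y).2) ^ 2 = algebraMap ℝ F (d ^ 2))
    (Y u s : ℝ × ℝ) (r ρ : ℚ)
    (hr : (r : ℝ) = u.1 ^ 2 + u.2 ^ 2) (hrpos : 0 < r)
    (hs : (ρ : ℝ) = s.1 ^ 2 + s.2 ^ 2) (hspos : 0 < ρ) :
    f (Y + s + u) - f (Y + s) = f (Y + u) - f Y := by
  haveI : CharZero F := charZero_of_injective_algebraMap (algebraMap ℝ F).injective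
  have D1 := linL f hf Y u r hr hrpos 2
  have D2 := linL f hf (Y + s) u r hr hrpos 2
  have D1f := congrArg Prod.fst D1
  have D1s := congrArg Prod.snd D1
  have D2f := congrArg Prod.fst D2
  have D2s := congrArg Prod.snd D2
  simp only [Prod.fst_sub, Prod.snd_sub, Prod.smul_fst, Prod.smul_snd, smul_eq_mul,
    Rat.cast_ofNat] at D1f D1s D2f D2s
  have T1 : ((f (Y + s)).1 - (f Y).1) ^ 2 + ((f (Y + s)).2 - (f Y).2) ^ 2 = (ρ : F) := by
    have := phi_eq f hf (Y + s) Y ρ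
      (by simp only [Dre, Prod.fst_add, Prod.snd_add]; linear_combination hs) hspos
    simpa [QF, Prod.fst_sub, Prod.snd_sub] using this
  have T2 : ((f (Y + s + u)).1 - (f (Y + u)).1) ^ 2
      + ((f (Y + s + u)).2 - (f (Y + u)).2) ^ 2 = (ρ : F) := by
    have := phi_eq f hf (Y + s + u) (Y + u) ρ
      (by simp only [Dre, Prod.fst_add, Prod.snd_add]; linear_combination hs) hspos
    simpa [QF, Prod.fst_sub, Prod.snd_sub] using this
  have T3 : ((f (Y + s + (2 : ℝ) • u)).1 - (f (Y + (2 : ℝ) • u)).1) ^ 2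
      + ((f (Y + s + (2 : ℝ) • u)).2 - (f (Y + (2 : ℝ) • u)).2) ^ 2 = (ρ : F) := by
    have := phi_eq f hf (Y + s + (2 : ℝ) • u) (Y + (2 : ℝ) • u) ρ
      (by simp only [Dre, Prod.fst_add, Prod.snd_add, Prod.smul_fst, Prod.smul_snd,
            smul_eq_mul]
          linear_combination hs) hspos
    simpa [QF, Prod.fst_sub, Prod.snd_sub] using this
  have T4 : ((f (Y + u)).1 - (f Y).1) ^ 2 + ((f (Y + u)).2 - (f Y).2) ^ 2 = (r : F) := by
    have := phi_eq f hf (Y + u) Y r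
      (by simp only [Dre, Prod.fst_add, Prod.snd_add]; linear_combination hr) hrpos
    simpa [QF, Prod.fst_sub, Prod.snd_sub] using this
  have T5 : ((f (Y + s + u)).1 - (f (Y + s)).1) ^ 2
      + ((f (Y + s + u)).2 - (f (Y + s)).2) ^ 2 = (r : F) := by
    have := phi_eq f hf (Y + s + u) (Y + s) r
      (by simp only [Dre, Prod.fst_add, Prod.snd_add]; linear_combination hr) hrpos
    simpa [QF, Prod.fst_sub, Prod.snd_sub] using this
  set a1 := (f (Y + u)).1 - (f Y).1 with ha1
  set a2 := (f (Y + u)).2 - (f Y).2 with ha2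
  set b1 := (f (Y + s)).1 - (f Y).1 with hb1
  set b2 := (f (Y + s)).2 - (f Y).2 with hb2
  set c1 := ((f (Y + s + u)).1 - (f (Y + s)).1) - a1 with hc1
  set c2 := ((f (Y + s + u)).2 - (f (Y + s)).2) - a2 with hc2
  have E1 : (f (Y + s + (2 : ℝ) • u)).1 - (f (Y + (2 : ℝ) • u)).1
      = b1 + 2 * c1 := by
    rw [hb1, hc1, ha1]; linear_combination D2f - D1f
  have E2 : (f (Y + s + (2 : ℝ) • u)).2 - (f (Y + (2 : ℝ) • u)).2
      = b2 + 2 * c2 := by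
    rw [hb2, hc2, ha2]; linear_combination D2s - D1s
  rw [E1, E2] at T3
  have T2' : (b1 + c1) ^ 2 + (b2 + c2) ^ 2 = (ρ : F) := by
    rw [hb1, hb2, hc1, hc2, ha1, ha2]; linear_combination T2
  have T5' : (a1 + c1) ^ 2 + (a2 + c2) ^ 2 = (r : F) := by
    rw [ha1, ha2, hc1, hc2]; linear_combination T5
  have hc : c1 ^ 2 + c2 ^ 2 = 0 := by
    linear_combination (T3 + T1) / 2 - T2'
  have hac : a1 * c1 + a2 * c2 = 0 := by
    linear_combination (T5' - T4 - hc) / 2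
  have hrne : ((r : ℚ) : F) ≠ 0 := by exact_mod_cast hrpos.ne'
  have h1 : (r : F) * c1 ^ 2 = 0 := by
    linear_combination (a1 * c1 - a2 * c2) * hac + a2 ^ 2 * hc - c1 ^ 2 * T4
  have hc1z : c1 = 0 := by
    have h2 := (mul_eq_zero.mp h1).resolve_left hrne
    exact pow_eq_zero_iff (n := 2) (by norm_num) |>.mp h2
  have hc2z : c2 = 0 := by
    have h2 : c2 ^ 2 = 0 := by rw [hc1z] at hc; linear_combination hc
    exact pow_eq_zero_iff (n := 2) (by norm_num) |>.mp h2
  apply Prod.ext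
  · simp only [Prod.fst_sub]
    rw [hc1, ha1] at hc1z
    linear_combination hc1z
  · simp only [Prod.snd_sub]
    rw [hc2, ha2] at hc2z
    linear_combination hc2z

end BQhelpers

/-- `f : ℝ² → 𝔽²` preserves every distance `d > 0` with `d²` rational
(`|x-y| = d` implies `φ (f x) (f y) = d²`). -/
theorem stmt_7 {F : Type*} [Field F] [Algebra ℝ F]
    (f : ℝ × ℝ → F × F)
    (hf : ∀ d : ℝ, 0 < d → (∃ q : ℚ, (q : ℝ) = d ^ 2) →
      ∀ x y : ℝ × ℝ, Real.sqrt ((x.1 - y.1) ^ 2 + (x.2 - y.2) ^ 2) = d →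
        ((f x).1 - (f y).1) ^ 2 + ((f x).2 - (f y).2) ^ 2 = algebraMap ℝ F (d ^ 2))
    (t : ℚ) (ht0 : 0 < t) (ht1 : t < 1) (A B C : ℝ × ℝ) (hAB : A ≠ B)
    (hC : C = (t : ℝ) • A + ((1 : ℝ) - (t : ℝ)) • B) :
    f C = (t : F) • f A + ((1 : F) - (t : F)) • f B := by
  haveI : CharZero F := charZero_of_injective_algebraMap (algebraMap ℝ F).injective
  set v : ℝ × ℝ := B - A with hv
  have hvne : v ≠ 0 := sub_ne_zero.mpr (Ne.symm hAB)
  have hL2 : 0 < v.1 ^ 2 + v.2 ^ 2 := by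
    rcases (not_and_or.mp (mt Prod.ext_iff.mpr hvne)) with h | h
    · have h1 : 0 < v.1 ^ 2 := lt_of_le_of_ne (sq_nonneg _) (Ne.symm (pow_ne_zero 2 h))
      have h2 : (0:ℝ) ≤ v.2 ^ 2 := sq_nonneg _
      linarith
    · have h1 : 0 < v.2 ^ 2 := lt_of_le_of_ne (sq_nonneg _) (Ne.symm (pow_ne_zero 2 h))
      have h2 : (0:ℝ) ≤ v.1 ^ 2 := sq_nonneg _
      linarith
  obtain ⟨ρ, hρ⟩ := exists_rat_gt ((v.1 ^ 2 + v.2 ^ 2) / 4)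
  have hρpos : 0 < ρ := by
    have : (0:ℝ) < (ρ : ℝ) := lt_of_le_of_lt (by positivity) hρ
    exact_mod_cast this
  set γ : ℝ := Real.sqrt (((ρ : ℝ) - (v.1 ^ 2 + v.2 ^ 2) / 4) / (v.1 ^ 2 + v.2 ^ 2)) with hγ
  have hγ2 : γ ^ 2 = ((ρ : ℝ) - (v.1 ^ 2 + v.2 ^ 2) / 4) / (v.1 ^ 2 + v.2 ^ 2) := by
    rw [hγ]
    exact Real.sq_sqrt (div_nonneg (by linarith) hL2.le)
  have hγL : γ ^ 2 * (v.1 ^ 2 + v.2 ^ 2) = (ρ : ℝ) - (v.1 ^ 2 + v.2 ^ 2) / 4 := by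
    rw [hγ2]; field_simp
  set u₁ : ℝ × ℝ := (v.1 / 2 - γ * v.2, v.2 / 2 + γ * v.1) with hu₁
  set u₂ : ℝ × ℝ := (v.1 / 2 + γ * v.2, v.2 / 2 - γ * v.1) with hu₂
  have h1 : (ρ : ℝ) = u₁.1 ^ 2 + u₁.2 ^ 2 := by
    rw [hu₁]
    simp only []
    linear_combination -hγL
  have h2 : (ρ : ℝ) = u₂.1 ^ 2 + u₂.2 ^ 2 := by
    rw [hu₂]
    simp only []
    linear_combination -hγL
  -- structural facts
  have S1 := linL f hf A u₁ ρ h1 hρpos (1 - t)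
  have S2 := linL f hf (A + ((1 - t : ℚ) : ℝ) • u₁) u₂ ρ h2 hρpos (1 - t)
  have hsn : ((t ^ 2 * ρ : ℚ) : ℝ) = ((t : ℝ) • u₁).1 ^ 2 + ((t : ℝ) • u₁).2 ^ 2 := by
    simp only [Prod.smul_fst, Prod.smul_snd, smul_eq_mul]
    push_cast
    linear_combination ((t:ℝ))^2 * h1
  have TR := transfer f hf (A + ((1 - t : ℚ) : ℝ) • u₁) u₂ ((t : ℝ) • u₁) ρ (t ^ 2 * ρ)
    h2 hρpos hsn (by positivity)
  -- point identities
  have P1 : A + ((1 - t : ℚ) : ℝ) • u₁ + (t : ℝ) • u₁ = A + u₁ := by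
    apply Prod.ext <;>
      simp only [Prod.fst_add, Prod.snd_add, Prod.smul_fst, Prod.smul_snd, smul_eq_mul] <;>
      push_cast <;> ring
  have P2 : A + u₁ + u₂ = B := by
    apply Prod.ext <;>
      simp only [hu₁, hu₂, hv, Prod.fst_add, Prod.snd_add, Prod.fst_sub, Prod.snd_sub] <;>
      ring
  have P3 : A + ((1 - t : ℚ) : ℝ) • u₁ + ((1 - t : ℚ) : ℝ) • u₂ = C := by
    rw [hC]
    apply Prod.ext <;>
      simp only [hu₁, hu₂, hv, Prod.fst_add, Prod.snd_add, Prod.fst_sub, Prod.snd_sub,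
        Prod.smul_fst, Prod.smul_snd, smul_eq_mul] <;>
      push_cast <;> ring
  rw [P1, P2] at TR
  rw [P3] at S2
  have S1f := congrArg Prod.fst S1
  have S1s := congrArg Prod.snd S1
  have S2f := congrArg Prod.fst S2
  have S2s := congrArg Prod.snd S2
  have TRf := congrArg Prod.fst TR
  have TRs := congrArg Prod.snd TR
  simp only [Prod.fst_sub, Prod.snd_sub, Prod.smul_fst, Prod.smul_snd,
    smul_eq_mul] at S1f S1s S2f S2s TRf TRs
  push_cast at S1f S1s S2f S2s TRf TRs
  apply Prod.ext
  · simp only [Prod.fst_add, Prod.smul_fst, smul_eq_mul]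
    linear_combination S2f - (1 - (t : F)) * TRf + S1f
  · simp only [Prod.snd_add, Prod.smul_snd, smul_eq_mul]
    linear_combination S2s - (1 - (t : F)) * TRs + S1s
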